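/- arXiv:2002.00304 — 2 statements merged into one kernel-verified Lean document; each statement's English description precedes it below -/
import Mathlib

section
/- Let R be a unital alternative ring with nontrivial idempotent e₁ and e₂ = 1 − e₁, k-torsion free for every k ∈ {2, 3, n−1, n−3} with k ≥ 1, satisfying conditions (1), (2), (3) and (4), and let D : R → R be a multiplicative Lie n-derivation (n ≥ 2) satisfying conditions (a) and (b) and with D(e₁) ∈ Z(R). Then for i ∈ {1,2}, D(R_ii) ⊆ R_ii + Z(R); that is, for every a ∈ R_ii there exist b ∈ R_ii and z ∈ Z(R) with D(a) = b + z. -/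
/-- The commutative center of a (possibly non-associative, non-unital) ring. -/
def rctr (R : Type*) [NonUnitalNonAssocRing R] : Set R := {z | ∀ x, z * x = x * z}

/-- `R` is an alternative ring. -/
def IsAlt (R : Type*) [NonUnitalNonAssocRing R] : Prop :=
  ∀ x y : R, (x * x) * y = x * (x * y) ∧ (y * x) * x = y * (x * x)

/-- Peirce components relative to an idempotent `e`. -/
def P11 {R : Type*} [NonUnitalNonAssocRing R] (e : R) : Set R := {x | e * x = x ∧ x * e = x}
def P12 {R : Type*} [NonUnitalNonAssocRing R] (e : R) : Set R := {x | e * x = x ∧ x * e = 0}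
def P21 {R : Type*} [NonUnitalNonAssocRing R] (e : R) : Set R := {x | e * x = 0 ∧ x * e = x}
def P22 {R : Type*} [NonUnitalNonAssocRing R] (e : R) : Set R := {x | e * x = 0 ∧ x * e = 0}

/-- The iterated commutator `p_n`: `p_1(x) = x`,
`p_n(x_1,…,x_n) = [p_{n-1}(x_1,…,x_{n-1}), x_n]`. -/
def pn {R : Type*} [NonUnitalNonAssocRing R] : (n : ℕ) → (Fin n → R) → R
  | 0, _ => 0
  | 1, x => x 0
  | (m+2), x =>
      pn (m+1) (fun i => x i.castSucc) * x (Fin.last (m+1))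
        - x (Fin.last (m+1)) * pn (m+1) (fun i => x i.castSucc)

/-- A (not necessarily additive) map `D` is a multiplicative Lie `n`-derivation. -/
def IsMultLieNDeriv {R : Type*} [NonUnitalNonAssocRing R] (n : ℕ) (D : R → R) : Prop :=
  ∀ x : Fin n → R, D (pn n x) = ∑ i : Fin n, pn n (Function.update x i (D (x i)))

section Aux
variable {R : Type*} [NonAssocRing R]

/-- The commutator-with-`e` map. -/
def cbr (e : R) : R → R := fun s => s * e - e * s

lemma pn_two (x : Fin 2 → R) : pn 2 x = x 0 * x 1 - x 1 * x 0 := rfl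

lemma pn_succ (m : ℕ) (x : Fin (m+2) → R) :
    pn (m+2) x = pn (m+1) (fun i => x i.castSucc) * x (Fin.last (m+1))
      - x (Fin.last (m+1)) * pn (m+1) (fun i => x i.castSucc) := rfl

lemma flex_aux (halt : IsAlt R) (x y : R) : (x * y) * x = x * (y * x) := by
  have h1 := (halt (x + y) x).1
  have e1 := (halt x x).1
  have e2 := (halt x y).2
  have e3 := (halt y x).1
  simp only [add_mul, mul_add] at h1
  rw [e1, e2, e3] at h1
  have h2 := sub_eq_zero.mpr h1
  abel_nf at h2
  rw [sub_eq_zero.symm]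
  simpa [sub_eq_add_neg] using h2

lemma pn_comm_zero : ∀ (m : ℕ) (x : Fin (m+2) → R), x 0 * x 1 = x 1 * x 0 → pn (m+2) x = 0
  | 0, x, h => by rw [pn_two, h, sub_self]
  | (m+1), x, h => by
      have h' : x ((0 : Fin (m+2)).castSucc) * x ((1 : Fin (m+2)).castSucc)
          = x ((1 : Fin (m+2)).castSucc) * x ((0 : Fin (m+2)).castSucc) := by
        rw [Fin.castSucc_zero, Fin.castSucc_one]; exact h
      rw [pn_succ, pn_comm_zero m _ h', zero_mul, mul_zero, sub_zero]

lemma pn_ite : ∀ (m : ℕ) (t e : R),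
    pn (m+2) (fun i : Fin (m+2) => if i = 0 then t else e) = (cbr e)^[m+1] t
  | 0, t, e => by
      rw [pn_two, if_pos rfl, if_neg (by decide : (1 : Fin 2) ≠ 0)]
      rfl
  | (m+1), t, e => by
      rw [pn_succ]
      have h1 : (fun i : Fin (m+2) =>
          (fun j : Fin (m+3) => if j = 0 then t else e) i.castSucc)
          = fun i : Fin (m+2) => if i = 0 then t else e := by
        funext i
        simp [Fin.castSucc_eq_zero_iff]
      have hlast : (Fin.last (m+2)) ≠ 0 := by simp [Fin.ext_iff]
      rw [h1]
      simp only [if_neg hlast]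
      rw [pn_ite m t e]
      exact (Function.iterate_succ_apply' (cbr e) (m+1) t).symm

lemma cbr_two (e : R) (hra : ∀ y : R, (y * e) * e = y * e)
    (hla : ∀ y : R, e * (e * y) = e * y)
    (hflex : ∀ y : R, (e * y) * e = e * (y * e)) (t : R) :
    cbr e (cbr e t) = t * e + e * t - (e * (t * e) + e * (t * e)) := by
  simp only [cbr, sub_mul, mul_sub, hra, hla, hflex]
  abel

lemma cbr_three (e : R) (hra : ∀ y : R, (y * e) * e = y * e)
    (hla : ∀ y : R, e * (e * y) = e * y)
    (hflex : ∀ y : R, (e * y) * e = e * (y * e)) (t : R) :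
    cbr e (cbr e (cbr e t)) = cbr e t := by
  simp only [cbr, sub_mul, mul_sub, hra, hla, hflex]
  abel

lemma cbr2_zero (e : R) (hra : ∀ y : R, (y * e) * e = y * e)
    (hla : ∀ y : R, e * (e * y) = e * y)
    (hflex : ∀ y : R, (e * y) * e = e * (y * e)) (t : R)
    (h : cbr e (cbr e t) = 0) : t * e = e * t := by
  rw [cbr_two e hra hla hflex] at h
  have hr := congrArg (· * e) h
  have hl := congrArg (e * ·) h
  simp only [sub_mul, add_mul, mul_sub, mul_add, zero_mul, mul_zero, hra, hla, hflex] at hr hl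
  abel_nf at hr hl
  simp only [neg_one_zsmul, ← sub_eq_add_neg] at hr hl
  rw [eq_of_sub_eq_zero hr]
  exact neg_add_eq_zero.mp hl

lemma cbr_iter_zero (e : R) (hra : ∀ y : R, (y * e) * e = y * e)
    (hla : ∀ y : R, e * (e * y) = e * y)
    (hflex : ∀ y : R, (e * y) * e = e * (y * e)) :
    ∀ (k : ℕ) (t : R), (cbr e)^[k+1] t = 0 → t * e = e * t
  | 0, t, ht => by
      have h1 : cbr e t = 0 := by simpa using ht
      exact sub_eq_zero.mp (show t * e - e * t = 0 from h1)
  | 1, t, ht => by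
      refine cbr2_zero e hra hla hflex t ?_
      simpa [Function.iterate_succ_apply'] using ht
  | (k+2), t, ht => by
      refine cbr_iter_zero e hra hla hflex k t ?_
      have h3 : (cbr e)^[k+2+1] t = (cbr e)^[k+1] t := by
        rw [show k+2+1 = k+3 from rfl, Function.iterate_add_apply (cbr e) k 3 t,
          show (cbr e)^[3] t = cbr e (cbr e (cbr e t)) from rfl,
          cbr_three e hra hla hflex, ← Function.iterate_succ_apply]
      rw [← h3]
      exact ht

end Aux

theorem stmt13 {R : Type*} [NonAssocRing R] (halt : IsAlt R)
    (e₁ e₂ : R) (he₂ : e₂ = 1 - e₁)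
    (he : e₁ * e₁ = e₁) (hne0 : e₁ ≠ 0) (hne1 : e₁ ≠ 1)
    (n : ℕ) (hn : 2 ≤ n)
    (htor : ∀ k ∈ ({2, 3, n - 1, n - 3} : Set ℕ), 1 ≤ k → ∀ x : R, k • x = 0 → x = 0)
    (hc1 : (∀ x ∈ P12 e₁, (∀ y ∈ P21 e₁, x * y = 0) → x = 0) ∧
           (∀ x ∈ P21 e₁, (∀ y ∈ P12 e₁, x * y = 0) → x = 0))
    (hc2 : (∀ x ∈ P11 e₁, (∀ y ∈ P12 e₁, x * y = 0) → x = 0) ∧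
           (∀ x ∈ P11 e₁, (∀ y ∈ P21 e₁, y * x = 0) → x = 0))
    (hc3 : (∀ x ∈ P22 e₁, (∀ y ∈ P12 e₁, y * x = 0) → x = 0) ∧
           (∀ x ∈ P22 e₁, (∀ y ∈ P21 e₁, x * y = 0) → x = 0))
    (hc4 : ∀ z ∈ rctr R, z ≠ 0 → ∀ r : R, ∃ s : R, z * s = r)
    (D : R → R) (hD : IsMultLieNDeriv n D)
    (ha : ∀ a ∈ P11 e₁, ∃ z ∈ rctr R, (e₂ * D a) * e₂ = z * e₂)
    (hb : ∀ a ∈ P22 e₁, ∃ z ∈ rctr R, (e₁ * D a) * e₁ = z * e₁)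
    (hDe₁ : D e₁ ∈ rctr R) :
    (∀ a ∈ P11 e₁, ∃ b ∈ P11 e₁, ∃ z ∈ rctr R, D a = b + z) ∧
    (∀ a ∈ P22 e₁, ∃ b ∈ P22 e₁, ∃ z ∈ rctr R, D a = b + z) := by
  obtain ⟨m, rfl⟩ : ∃ m, n = m + 2 := ⟨n - 2, by omega⟩
  subst he₂
  have hra : ∀ y : R, (y * e₁) * e₁ = y * e₁ := fun y => by rw [(halt e₁ y).2, he]
  have hla : ∀ y : R, e₁ * (e₁ * y) = e₁ * y := fun y => by rw [← (halt e₁ y).1, he]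
  have hflex : ∀ y : R, (e₁ * y) * e₁ = e₁ * (y * e₁) := fun y => flex_aux halt e₁ y
  have h10 : (1 : Fin (m+2)) ≠ 0 := Fin.ne_of_val_ne (by simp)
  -- D 0 = 0
  have hD0 : D 0 = 0 := by
    have h := hD (fun _ => (0:R))
    have hz : pn (m+2) (fun _ : Fin (m+2) => (0:R)) = 0 := pn_comm_zero m _ (by simp)
    rw [hz] at h
    rw [h]
    refine Finset.sum_eq_zero fun i _ => ?_
    refine pn_comm_zero m _ ?_
    rcases eq_or_ne i 0 with h0 | h0
    · subst h0
      rw [Function.update_of_ne h10]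
      simp
    · rw [Function.update_of_ne h0.symm]
      simp
  -- D a commutes with e₁ whenever a does
  have hcomm : ∀ a : R, a * e₁ = e₁ * a → D a * e₁ = e₁ * D a := by
    intro a hae
    set x : Fin (m+2) → R := fun i => if i = 0 then a else e₁ with hxdef
    have hx0 : x 0 = a := by simp [hxdef]
    have hx1 : x 1 = e₁ := by simp [hxdef, h10]
    have hpnx : pn (m+2) x = 0 := by
      rw [hxdef, pn_ite, Function.iterate_succ_apply,
        show cbr e₁ a = 0 from sub_eq_zero.mpr hae,
        Function.iterate_fixed (show cbr e₁ 0 = 0 by simp [cbr]) m]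
    have h := hD x
    rw [hpnx, hD0] at h
    have hterm : ∀ i : Fin (m+2), i ≠ 0 →
        pn (m+2) (Function.update x i (D (x i))) = 0 := by
      intro i hi
      refine pn_comm_zero m _ ?_
      rw [Function.update_of_ne hi.symm, hx0]
      rcases eq_or_ne i 1 with h1 | h1
      · subst h1
        rw [Function.update_self, hx1]
        exact (hDe₁ a).symm
      · rw [Function.update_of_ne h1.symm, hx1]
        exact hae
    have hsum : ∑ i : Fin (m+2), pn (m+2) (Function.update x i (D (x i)))
        = pn (m+2) (Function.update x 0 (D (x 0))) :=
      Finset.sum_eq_single_of_mem 0 (Finset.mem_univ 0) (fun i _ hi => hterm i hi)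
    rw [hsum] at h
    have hupd : Function.update x 0 (D (x 0))
        = fun j : Fin (m+2) => if j = 0 then D a else e₁ := by
      funext j
      rcases eq_or_ne j 0 with h0 | h0
      · subst h0; rw [Function.update_self, hx0, if_pos rfl]
      · rw [Function.update_of_ne h0, if_neg h0, hxdef]
        simp [h0]
    rw [hupd, pn_ite] at h
    exact cbr_iter_zero e₁ hra hla hflex m (D a) h.symm
  constructor
  · -- D(R₁₁) ⊆ R₁₁ + Z
    intro a haP
    obtain ⟨ha1, ha2⟩ := haP
    obtain ⟨z, hzc, hz2⟩ := ha a ⟨ha1, ha2⟩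
    have hc : D a * e₁ = e₁ * D a := hcomm a (by rw [ha2, ha1])
    set t := D a with htdef
    have hq : (e₁ * t) * e₁ = e₁ * t := by rw [hflex, hc, hla]
    have hd : ((1 - e₁) * t) * (1 - e₁) = t - e₁ * t := by
      simp only [sub_mul, mul_sub, one_mul, mul_one, hq, hc]
      abel
    have hzd : z * (1 - e₁) = t - e₁ * t := by rw [← hz2, hd]
    have hze : z * e₁ = e₁ * z := hzc e₁
    refine ⟨e₁ * t - z * e₁, ⟨?_, ?_⟩, z, hzc, ?_⟩
    · show e₁ * (e₁ * t - z * e₁) = e₁ * t - z * e₁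
      rw [mul_sub, hla, hze, hla]
    · show (e₁ * t - z * e₁) * e₁ = e₁ * t - z * e₁
      rw [sub_mul, hq, hra]
    · show t = e₁ * t - z * e₁ + z
      have h5 : t - e₁ * t = z - z * e₁ := by rw [← hzd, mul_sub, mul_one]
      have h6 : t = z - z * e₁ + e₁ * t := by rw [← h5]; abel
      conv_lhs => rw [h6]
      abel
  · -- D(R₂₂) ⊆ R₂₂ + Z
    intro a haP
    obtain ⟨ha1, ha2⟩ := haP
    obtain ⟨z, hzc, hz2⟩ := hb a ⟨ha1, ha2⟩
    have hc : D a * e₁ = e₁ * D a := hcomm a (by rw [ha2, ha1])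
    set t := D a with htdef
    have hq : (e₁ * t) * e₁ = e₁ * t := by rw [hflex, hc, hla]
    have hzt : e₁ * t = z * e₁ := by rw [← hq, hz2]
    have hze : z * e₁ = e₁ * z := hzc e₁
    refine ⟨t - z, ⟨?_, ?_⟩, z, hzc, ?_⟩
    · show e₁ * (t - z) = 0
      rw [mul_sub, hzt, ← hze, sub_self]
    · show (t - z) * e₁ = 0
      rw [sub_mul, hc, hzt, sub_self]
    · show t = t - z + z
      abel
end

section
/- Let R be a unital alternative ring with nontrivial idempotent e₁ and e₂ = 1 − e₁, k-torsion free for every k ∈ {2, 3, n−1, n−3} with k ≥ 1, satisfying conditions (1), (2), (3) and (4), and let D : R → R be a multiplicative Lie n-derivation (n ≥ 2) satisfying conditions (a), (b), (c) and with D(e₁) ∈ Z(R). Then for i ≠ j in {1,2}, for all a ∈ R_ij, b ∈ R_jj and any c ∈ R_jj with D(b) − c ∈ Z(R), one has D(a*b) = D(a)*b + a*c. -/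
section Aux
variable {R : Type*} [NonAssocRing R]

/-- Linearized left alternative law. -/
lemma linL (halt : IsAlt R) (x y z : R) :
    (x*y)*z + (y*x)*z = x*(y*z) + y*(x*z) := by
  have h := (halt (x+y) z).1
  have hx := (halt x z).1
  have hy := (halt y z).1
  have key : ((x*y)*z + (y*x)*z) - (x*(y*z) + y*(x*z))
      = (((x+y)*(x+y))*z - (x+y)*((x+y)*z))
        - ((x*x)*z - x*(x*z)) - ((y*y)*z - y*(y*z)) := by
    simp only [add_mul, mul_add]
    abel
  rw [h, hx, hy] at key
  simp only [sub_self, sub_zero, zero_sub, neg_zero] at key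
  exact sub_eq_zero.mp key

/-- `R₂₂ · R₁₂ = 0`. -/
lemma p22_mul_p12 (halt : IsAlt R) (h2 : ∀ x : R, x + x = 0 → x = 0)
    {e₁ b a : R} (he : e₁ * e₁ = e₁)
    (hb1 : e₁*b = 0) (hb2 : b*e₁ = 0) (ha1 : e₁*a = a) (ha2 : a*e₁ = 0) :
    b * a = 0 := by
  have h1 := linL halt e₁ b a
  rw [hb1, hb2, ha1, zero_mul, zero_add] at h1
  -- h1 : 0 = e₁*(b*a) + b*a
  have hneg : e₁*(b*a) = -(b*a) := eq_neg_of_add_eq_zero_left h1.symm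
  have halt2 := (halt e₁ (b*a)).1
  rw [he] at halt2
  -- halt2 : e₁*(b*a) = e₁*(e₁*(b*a))
  have h3 : e₁ * (e₁ * (b*a)) = b*a := by rw [hneg, mul_neg, hneg, neg_neg]
  have h4 : b*a = -(b*a) := (h3.symm.trans halt2.symm).trans hneg
  exact h2 _ (add_eq_zero_iff_eq_neg.mpr h4)

/-- `R₁₁ · R₂₁ = 0`. -/
lemma p11_mul_p21 (halt : IsAlt R) (h2 : ∀ x : R, x + x = 0 → x = 0)
    {e₁ b a : R} (he : e₁ * e₁ = e₁)
    (hb1 : e₁*b = b) (hb2 : b*e₁ = b) (ha1 : e₁*a = 0) (ha2 : a*e₁ = a) :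
    b * a = 0 := by
  have h1 := linL halt e₁ b a
  rw [hb1, hb2, ha1, mul_zero, add_zero] at h1
  -- h1 : b*a + b*a = e₁*(b*a)
  have halt2 := (halt e₁ (b*a)).1
  rw [he] at halt2
  -- halt2 : e₁*(b*a) = e₁*(e₁*(b*a))
  have e2 : e₁*(e₁*(b*a)) = (b*a + b*a) + (b*a + b*a) := by
    rw [← h1, mul_add, ← h1]
  have e3 : b*a + b*a = (b*a + b*a) + (b*a + b*a) := (h1.trans halt2).trans e2
  have : b*a + b*a = 0 := by
    have := (left_eq_add).mp e3
    exact this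
  exact h2 _ this

end Aux

section Brkt
variable {R : Type*} [NonAssocRing R]

/-- Left-iterated commutator starting from `p`, bracketing successively with `q 0, q 1, …`. -/
def brkt (p : R) : {k : ℕ} → (Fin k → R) → R
  | 0, _ => p
  | _+1, q =>
      brkt p (fun i => q i.castSucc) * q (Fin.last _)
        - q (Fin.last _) * brkt p (fun i => q i.castSucc)

lemma brkt_succ (p : R) {k : ℕ} (q : Fin (k+1) → R) :
    brkt p q = brkt p (fun i => q i.castSucc) * q (Fin.last k)
      - q (Fin.last k) * brkt p (fun i => q i.castSucc) := rfl

lemma pn_eq_brkt : ∀ (k : ℕ) (x : Fin (k+1) → R),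
    pn (k+1) x = brkt (x 0) (fun i : Fin k => x i.succ) := by
  intro k
  induction k with
  | zero => intro x; rfl
  | succ k ih =>
    intro x
    have h1 : pn (k+2) x = pn (k+1) (fun i => x i.castSucc) * x (Fin.last (k+1))
        - x (Fin.last (k+1)) * pn (k+1) (fun i => x i.castSucc) := rfl
    rw [h1, ih]
    rw [brkt_succ (x 0) (fun i : Fin (k+1) => x i.succ)]
    simp only [Fin.castSucc_zero, Fin.succ_last, Fin.succ_castSucc]

lemma brkt_snoc (p : R) {k : ℕ} (f : Fin k → R) (v : R) :
    brkt p (Fin.snoc f v) = brkt p f * v - v * brkt p f := by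
  rw [brkt_succ]
  have e1 : (fun i : Fin k => (Fin.snoc f v : Fin (k+1) → R) i.castSucc) = f := by
    funext i; simp
  have e2 : (Fin.snoc f v : Fin (k+1) → R) (Fin.last k) = v := by simp
  rw [e1, e2]

lemma brkt_cons (p : R) : ∀ {k : ℕ} (q : Fin k → R) (x : R),
    brkt p (Fin.cons x q) = brkt (p*x - x*p) q := by
  intro k
  induction k with
  | zero =>
    intro q x
    rw [brkt_succ]
    simp [brkt]
  | succ k ih =>
    intro q x
    rw [brkt_succ]
    have e1 : (fun i : Fin (k+1) => (Fin.cons x q : Fin (k+2) → R) i.castSucc)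
        = Fin.cons x (fun i : Fin k => q i.castSucc) := by
      funext i
      refine Fin.cases ?_ ?_ i
      · simp
      · intro j
        rw [Fin.cons_succ]
        rw [← Fin.succ_castSucc, Fin.cons_succ]
    have e2 : (Fin.cons x q : Fin (k+2) → R) (Fin.last (k+1)) = q (Fin.last k) := by
      rw [← Fin.succ_last, Fin.cons_succ]
    rw [e1, e2, ih, brkt_succ (p*x - x*p) q]

lemma brkt_zero : ∀ {k : ℕ} (q : Fin k → R), brkt (0 : R) q = 0 := by
  intro k
  induction k with
  | zero => intro q; rfl
  | succ k ih => intro q; rw [brkt_succ, ih]; simp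

lemma brkt_central : ∀ {k : ℕ} (q : Fin k → R) (j : Fin k),
    (∀ x, q j * x = x * q j) → ∀ p : R, brkt p q = 0 := by
  intro k
  induction k with
  | zero => intro q j; exact j.elim0
  | succ k ih =>
    intro q j hj p
    refine Fin.lastCases ?_ ?_ j hj
    · intro hj
      rw [brkt_succ, hj]
      simp
    · intro j' hj
      rw [brkt_succ, ih (fun i => q i.castSucc) j' hj]
      simp

lemma brkt_const_plus {u v : R} (h : v*u - u*v = v) :
    ∀ k, brkt v (fun _ : Fin k => u) = v := by
  intro k
  induction k with
  | zero => rfl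
  | succ k ih =>
    rw [brkt_succ]
    simpa [ih] using h

lemma brkt_const_even {u v : R} (h : v*u - u*v = -v) :
    ∀ l, brkt v (fun _ : Fin (2*l) => u) = v := by
  intro l
  induction l with
  | zero => rfl
  | succ l ih =>
    show brkt v (fun _ : Fin (2*l+1+1) => u) = v
    rw [brkt_succ]
    have hmid : brkt v (fun _ : Fin (2*l+1) => u) = -v := by
      rw [brkt_succ]
      have : brkt v (fun _ : Fin (2*l) => u) = v := ih
      simpa [this] using h
    rw [hmid]
    rw [neg_mul, mul_neg, sub_neg_eq_add, neg_add_eq_sub]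
    rw [sub_eq_iff_eq_add] at h
    rw [h]; abel

lemma brkt_update_const_plus {u v w : R} (hu : v*u - u*v = v) (hw : v*w - w*v = 0) :
    ∀ {k : ℕ} (j : Fin k), brkt v (Function.update (fun _ : Fin k => u) j w) = 0 := by
  intro k
  induction k with
  | zero => intro j; exact j.elim0
  | succ k ih =>
    intro j
    refine Fin.lastCases ?_ ?_ j
    · have e1 : (fun i : Fin k =>
          (Function.update (fun _ : Fin (k+1) => u) (Fin.last k) w) i.castSucc)
          = (fun _ : Fin k => u) := by
        funext i
        rw [Function.update_of_ne (Fin.castSucc_lt_last i).ne]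
      rw [brkt_succ, e1, Function.update_self, brkt_const_plus hu]
      exact hw
    · intro j'
      have e1 : (fun i : Fin k =>
          (Function.update (fun _ : Fin (k+1) => u) j'.castSucc w) i.castSucc)
          = Function.update (fun _ : Fin k => u) j' w := by
        funext i
        simp [Function.update_apply, Fin.castSucc_inj]
      have e2 : (Function.update (fun _ : Fin (k+1) => u) j'.castSucc w) (Fin.last k) = u := by
        rw [Function.update_of_ne (Fin.castSucc_lt_last j').ne']
      rw [brkt_succ, e1, e2, ih]
      simp

end Brkt

section Master
variable {R : Type*} [NonAssocRing R]

lemma pn_cons_snoc (m : ℕ) (p : R) (f : Fin m → R) (v : R) :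
    pn (m+2) (Fin.cons p (Fin.snoc f v)) = brkt p f * v - v * brkt p f := by
  rw [pn_eq_brkt (m+1)]
  have e0 : (Fin.cons p (Fin.snoc f v) : Fin (m+2) → R) 0 = p := rfl
  have e1 : (fun i : Fin (m+1) => (Fin.cons p (Fin.snoc f v) : Fin (m+2) → R) i.succ)
      = Fin.snoc f v := by
    funext i; rw [Fin.cons_succ]
  rw [e0, e1, brkt_snoc]

lemma master (m : ℕ) (D : R → R) (hD : IsMultLieNDeriv (m+2) D)
    (a b c u : R)
    (hA : brkt a (fun _ : Fin m => u) = a)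
    (hDA : brkt (D a) (fun _ : Fin m => u) = D a)
    (hmid : ∀ j : Fin m, brkt a (Function.update (fun _ : Fin m => u) j (D u)) = 0)
    (hba : b * a = 0) (hbDa : b * D a = 0)
    (habD : a * D b - D b * a = a * c) :
    D (a * b) = D a * b + a * c := by
  set cst : Fin m → R := (fun _ : Fin m => u) with hcst
  set t : Fin (m+1) → R := Fin.snoc cst b with ht
  set x : Fin (m+2) → R := Fin.cons a t with hx
  have key := hD x
  -- left-hand side
  have hLHS : pn (m+2) x = a * b := by
    rw [hx, ht, pn_cons_snoc, hA, hba, sub_zero]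
  -- term at index 0
  have T0 : pn (m+2) (Function.update x 0 (D (x 0))) = D a * b := by
    have h0 : x 0 = a := by rw [hx]; simp
    rw [h0, hx, Fin.update_cons_zero, ht, pn_cons_snoc, hDA, hbDa, sub_zero]
  -- middle terms
  have Tmid : ∀ j' : Fin m,
      pn (m+2) (Function.update x (j'.castSucc.succ) (D (x j'.castSucc.succ))) = 0 := by
    intro j'
    have h0 : x j'.castSucc.succ = u := by
      rw [hx, Fin.cons_succ, ht, Fin.snoc_castSucc]
    have h1 : Function.update x (j'.castSucc.succ) (D u)
        = Fin.cons a (Fin.snoc (Function.update cst j' (D u)) b) := by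
      rw [hx, ← Fin.cons_update, ht, ← Fin.snoc_update]
    rw [h0, h1, pn_cons_snoc, hmid j']
    simp
  -- last term
  have Tlast : pn (m+2) (Function.update x ((Fin.last m).succ) (D (x (Fin.last m).succ))) = a * c := by
    have h0 : x (Fin.last m).succ = b := by
      rw [hx, Fin.cons_succ, ht, Fin.snoc_last]
    have h1 : Function.update x ((Fin.last m).succ) (D b)
        = Fin.cons a (Fin.snoc cst (D b)) := by
      rw [hx, ← Fin.cons_update, ht, Fin.update_snoc_last]
    rw [h0, h1, pn_cons_snoc, hA, habD]
  rw [hLHS, Fin.sum_univ_succ, Fin.sum_univ_castSucc] at key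
  simp only [T0, Tmid, Tlast, Finset.sum_const_zero, zero_add] at key
  exact key

end Master

section Helper
variable {R : Type*} [NonAssocRing R]

lemma pn_cons_cons_snoc (m : ℕ) (p q : R) (f : Fin m → R) (v : R) :
    pn (m+3) (Fin.cons p (Fin.cons q (Fin.snoc f v)))
      = brkt (p*q - q*p) f * v - v * brkt (p*q - q*p) f := by
  rw [pn_eq_brkt (m+2)]
  have e0 : (Fin.cons p (Fin.cons q (Fin.snoc f v)) : Fin (m+3) → R) 0 = p := rfl
  have e1 : (fun i : Fin (m+2) => (Fin.cons p (Fin.cons q (Fin.snoc f v)) : Fin (m+3) → R) i.succ)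
      = Fin.cons q (Fin.snoc f v) := by
    funext i; rw [Fin.cons_succ]
  rw [e0, e1, brkt_cons, brkt_snoc]

lemma helper_comm (l : ℕ) (D : R → R) (hD : IsMultLieNDeriv (2*l+3) D)
    (e₁ v : R) (hDe₁ : ∀ x : R, D e₁ * x = x * D e₁)
    (w : R) (hw1 : e₁*w = w) (hw2 : w*e₁ = 0)
    (hDw1 : e₁*(D w) = D w) (hDw2 : (D w)*e₁ = 0)
    (hwv : w*v - v*w = w) (hDwv : D w * v - v * D w = D w) :
    w * D v - D v * w = 0 := by
  set cst : Fin (2*l) → R := (fun _ : Fin (2*l) => e₁) with hcst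
  set T : Fin (2*l+1) → R := Fin.snoc cst v with hT
  set t : Fin (2*l+2) → R := Fin.cons w T with ht
  set Y : Fin (2*l+3) → R := Fin.cons e₁ t with hY
  have hbw : brkt w cst = w := by
    rw [hcst]
    exact brkt_const_even (by rw [hw2, hw1, zero_sub]) l
  have hbDw : brkt (D w) cst = D w := by
    rw [hcst]
    exact brkt_const_even (by rw [hDw2, hDw1, zero_sub]) l
  have key := hD Y
  have hLHS : pn (2*l+3) Y = w := by
    rw [hY, ht, hT, pn_cons_cons_snoc]
    rw [hw1, hw2, sub_zero, hbw, hwv]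
  have T0 : pn (2*l+3) (Function.update Y 0 (D (Y 0))) = 0 := by
    have h0 : Y 0 = e₁ := by rw [hY]; simp
    rw [h0, hY, Fin.update_cons_zero, ht, hT, pn_cons_cons_snoc]
    have : D e₁ * w - w * D e₁ = 0 := by rw [hDe₁ w, sub_self]
    rw [this, brkt_zero]
    simp
  have T1 : pn (2*l+3) (Function.update Y ((0 : Fin (2*l+2)).succ) (D (Y (0 : Fin (2*l+2)).succ))) = D w := by
    have h0 : Y (0 : Fin (2*l+2)).succ = w := by
      rw [hY, Fin.cons_succ, ht]; simp
    have h1 : Function.update Y ((0 : Fin (2*l+2)).succ) (D w)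
        = Fin.cons e₁ (Fin.cons (D w) T) := by
      rw [hY, ← Fin.cons_update, ht, Fin.update_cons_zero]
    rw [h0, h1, hT, pn_cons_cons_snoc]
    rw [hDw1, hDw2, sub_zero, hbDw, hDwv]
  have Tmid : ∀ j'' : Fin (2*l),
      pn (2*l+3) (Function.update Y (j''.castSucc.succ.succ) (D (Y j''.castSucc.succ.succ))) = 0 := by
    intro j''
    have h0 : Y j''.castSucc.succ.succ = e₁ := by
      rw [hY, Fin.cons_succ, ht, Fin.cons_succ, hT, Fin.snoc_castSucc]
    have h1 : Function.update Y (j''.castSucc.succ.succ) (D e₁)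
        = Fin.cons e₁ (Fin.cons w (Fin.snoc (Function.update cst j'' (D e₁)) v)) := by
      rw [hY, ← Fin.cons_update, ht, ← Fin.cons_update, hT, ← Fin.snoc_update]
    rw [h0, h1, pn_cons_cons_snoc]
    rw [hw1, hw2, sub_zero]
    have : brkt w (Function.update cst j'' (D e₁)) = 0 := by
      refine brkt_central _ j'' ?_ w
      intro x
      rw [Function.update_self]
      exact hDe₁ x
    rw [this]
    simp
  have Tlast : pn (2*l+3) (Function.update Y ((Fin.last (2*l)).succ.succ) (D (Y (Fin.last (2*l)).succ.succ)))
      = w * D v - D v * w := by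
    have h0 : Y (Fin.last (2*l)).succ.succ = v := by
      rw [hY, Fin.cons_succ, ht, Fin.cons_succ, hT, Fin.snoc_last]
    have h1 : Function.update Y ((Fin.last (2*l)).succ.succ) (D v)
        = Fin.cons e₁ (Fin.cons w (Fin.snoc cst (D v))) := by
      rw [hY, ← Fin.cons_update, ht, ← Fin.cons_update, hT, Fin.update_snoc_last]
    rw [h0, h1, pn_cons_cons_snoc]
    rw [hw1, hw2, sub_zero, hbw]
  rw [hLHS, Fin.sum_univ_succ, Fin.sum_univ_succ, Fin.sum_univ_castSucc] at key
  simp only [T0, T1, Tmid, Tlast, Finset.sum_const_zero, zero_add, add_zero] at key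
  exact left_eq_add.mp key

end Helper


theorem stmt15 {R : Type*} [NonAssocRing R] (halt : IsAlt R)
    (e₁ e₂ : R) (he₂ : e₂ = 1 - e₁)
    (he : e₁ * e₁ = e₁) (hne0 : e₁ ≠ 0) (hne1 : e₁ ≠ 1)
    (n : ℕ) (hn : 2 ≤ n)
    (htor : ∀ k ∈ ({2, 3, n - 1, n - 3} : Set ℕ), 1 ≤ k → ∀ x : R, k • x = 0 → x = 0)
    (hc1 : (∀ x ∈ P12 e₁, (∀ y ∈ P21 e₁, x * y = 0) → x = 0) ∧
           (∀ x ∈ P21 e₁, (∀ y ∈ P12 e₁, x * y = 0) → x = 0))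
    (hc2 : (∀ x ∈ P11 e₁, (∀ y ∈ P12 e₁, x * y = 0) → x = 0) ∧
           (∀ x ∈ P11 e₁, (∀ y ∈ P21 e₁, y * x = 0) → x = 0))
    (hc3 : (∀ x ∈ P22 e₁, (∀ y ∈ P12 e₁, y * x = 0) → x = 0) ∧
           (∀ x ∈ P22 e₁, (∀ y ∈ P21 e₁, x * y = 0) → x = 0))
    (hc4 : ∀ z ∈ rctr R, z ≠ 0 → ∀ r : R, ∃ s : R, z * s = r)
    (D : R → R) (hD : IsMultLieNDeriv n D)
    (ha : ∀ a ∈ P11 e₁, ∃ z ∈ rctr R, (e₂ * D a) * e₂ = z * e₂)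
    (hb : ∀ a ∈ P22 e₁, ∃ z ∈ rctr R, (e₁ * D a) * e₁ = z * e₁)
    (hcc : (∀ a ∈ P12 e₁, D a ∈ P12 e₁) ∧ (∀ a ∈ P21 e₁, D a ∈ P21 e₁))
    (hDe₁ : D e₁ ∈ rctr R)
    :
    (∀ a ∈ P12 e₁, ∀ b ∈ P22 e₁, ∀ c ∈ P22 e₁, D b - c ∈ rctr R →
      D (a * b) = D a * b + a * c) ∧
    (∀ a ∈ P21 e₁, ∀ b ∈ P11 e₁, ∀ c ∈ P11 e₁, D b - c ∈ rctr R →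
      D (a * b) = D a * b + a * c) := by
  have h2tor : ∀ x : R, x + x = 0 → x = 0 := by
    intro x hx
    refine htor 2 (Set.mem_insert _ _) (by norm_num) x ?_
    rw [two_nsmul]
    exact hx
  obtain ⟨m, rfl⟩ : ∃ m, n = m + 2 := ⟨n - 2, by omega⟩
  have hDe₁' : ∀ x : R, D e₁ * x = x * D e₁ := fun x => hDe₁ x
  have hmidcentral : ∀ (k : ℕ) (j : Fin k) (p : R),
      brkt p (Function.update (fun _ : Fin k => e₁) j (D e₁)) = 0 := by
    intro k j p
    refine brkt_central _ j ?_ p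
    intro x
    rw [Function.update_self]
    exact hDe₁' x
  constructor
  · -- a ∈ R₁₂, b, c ∈ R₂₂
    intro a haP b hbP c hcP hzc
    obtain ⟨hDa1, hDa2⟩ := hcc.1 a haP
    obtain ⟨ha1, ha2⟩ := haP
    obtain ⟨hb1, hb2⟩ := hbP
    obtain ⟨hcP1, hcP2⟩ := hcP
    have hba : b * a = 0 := p22_mul_p12 halt h2tor he hb1 hb2 ha1 ha2
    have hbDa : b * D a = 0 := p22_mul_p12 halt h2tor he hb1 hb2 hDa1 hDa2
    have hca : c * a = 0 := p22_mul_p12 halt h2tor he hcP1 hcP2 ha1 ha2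
    have habD : a * D b - D b * a = a * c := by
      have h1 : (D b - c) * a = a * (D b - c) := hzc a
      have expand : a * D b - D b * a = (a*c - c*a) + (a*(D b - c) - (D b - c)*a) := by
        rw [mul_sub, sub_mul]
        abel
      rw [h1, sub_self, add_zero, hca, sub_zero] at expand
      exact expand
    rcases Nat.even_or_odd m with hm | hm
    · obtain ⟨l, hl⟩ := hm
      have hml : m = 2*l := by omega
      subst hml
      refine master (2*l) D hD a b c e₁ ?_ ?_ ?_ hba hbDa habD
      · exact brkt_const_even (by rw [ha2, ha1, zero_sub]) l
      · exact brkt_const_even (by rw [hDa2, hDa1, zero_sub]) l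
      · intro j
        exact hmidcentral (2*l) j a
    · obtain ⟨l, hl⟩ := hm
      subst hl
      have hae₂ : a*e₂ - e₂*a = a := by
        rw [he₂, mul_sub, sub_mul, mul_one, one_mul, ha2, ha1]
        abel
      have hDae₂ : D a*e₂ - e₂*D a = D a := by
        rw [he₂, mul_sub, sub_mul, mul_one, one_mul, hDa2, hDa1]
        abel
      have hcomm : a * D e₂ - D e₂ * a = 0 :=
        helper_comm l D hD e₁ e₂ hDe₁' a ha1 ha2 hDa1 hDa2 hae₂ hDae₂
      refine master (2*l+1) D hD a b c e₂ (brkt_const_plus hae₂ _)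
        (brkt_const_plus hDae₂ _) (fun j => brkt_update_const_plus hae₂ hcomm j)
        hba hbDa habD
  · -- a ∈ R₂₁, b, c ∈ R₁₁
    intro a haP b hbP c hcP hzc
    obtain ⟨hDa1, hDa2⟩ := hcc.2 a haP
    obtain ⟨ha1, ha2⟩ := haP
    obtain ⟨hb1, hb2⟩ := hbP
    obtain ⟨hcP1, hcP2⟩ := hcP
    have hba : b * a = 0 := p11_mul_p21 halt h2tor he hb1 hb2 ha1 ha2
    have hbDa : b * D a = 0 := p11_mul_p21 halt h2tor he hb1 hb2 hDa1 hDa2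
    have hca : c * a = 0 := p11_mul_p21 halt h2tor he hcP1 hcP2 ha1 ha2
    have habD : a * D b - D b * a = a * c := by
      have h1 : (D b - c) * a = a * (D b - c) := hzc a
      have expand : a * D b - D b * a = (a*c - c*a) + (a*(D b - c) - (D b - c)*a) := by
        rw [mul_sub, sub_mul]
        abel
      rw [h1, sub_self, add_zero, hca, sub_zero] at expand
      exact expand
    refine master m D hD a b c e₁ (brkt_const_plus ?_ _) (brkt_const_plus ?_ _)
      (fun j => hmidcentral m j a) hba hbDa habD
    · rw [ha2, ha1, sub_zero]
    · rw [hDa2, hDa1, sub_zero]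
end
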